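/- Suppose A is an n×n complex matrix with A*A − AA* = H = diag(d, −d, 0, …, 0), d > 0, and B = [[A, x],[y*, z]] is a normal (n+1)×(n+1) completion of A. Then x and y are supported on their first two coordinates: x = (x1, x2, 0, …, 0) and y = (y1, y2, 0, …, 0), with |x1|² − |x2|² = d, y1 = e^{iθ} conj(x2) and y2 = e^{iθ} conj(x1) for some real θ. -/

import Mathlib

open Matrix

/-- The `(n+1)×(n+1)` block matrix `[[A, x],[y*, z]]`. -/
def completion {n : ℕ} (A : Matrix (Fin n) (Fin n) ℂ) (x y : Fin n → ℂ) (z : ℂ) :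
    Matrix (Fin n ⊕ Fin 1) (Fin n ⊕ Fin 1) ℂ :=
  Matrix.fromBlocks A (Matrix.of fun i (_ : Fin 1) => x i)
    (Matrix.of fun (_ : Fin 1) j => star (y j)) (Matrix.of fun _ _ => z)

theorem stmt6 (m : ℕ) (d : ℝ) (hd : 0 < d) (A : Matrix (Fin (m + 2)) (Fin (m + 2)) ℂ)
    (hH : Aᴴ * A - A * Aᴴ =
      Matrix.diagonal (fun i : Fin (m + 2) =>
        if (i : ℕ) = 0 then (d : ℂ) else if (i : ℕ) = 1 then -(d : ℂ) else 0))
    (x y : Fin (m + 2) → ℂ) (z : ℂ)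
    (hB : (completion A x y z)ᴴ * completion A x y z
        = completion A x y z * (completion A x y z)ᴴ) :
    (∀ i : Fin (m + 2), 2 ≤ (i : ℕ) → x i = 0 ∧ y i = 0) ∧
    Complex.normSq (x 0) - Complex.normSq (x 1) = d ∧
    ∃ θ : ℝ, y 0 = Complex.exp (θ * Complex.I) * star (x 1) ∧
      y 1 = Complex.exp (θ * Complex.I) * star (x 0) := by
  have key : ∀ i j : Fin (m + 2),
      x i * star (x j) - y i * star (y j)
        = Matrix.diagonal (fun i : Fin (m + 2) =>
            if (i : ℕ) = 0 then (d : ℂ) else if (i : ℕ) = 1 then -(d : ℂ) else 0) i j := by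
    intro i j
    have h1 := congrFun (congrFun hB (Sum.inl i)) (Sum.inl j)
    have h2 := congrFun (congrFun hH i) j
    simp only [completion, Matrix.mul_apply, Fintype.sum_sum_type, Fin.sum_univ_one,
      Matrix.conjTranspose_apply, Matrix.fromBlocks_apply₁₁, Matrix.fromBlocks_apply₁₂,
      Matrix.fromBlocks_apply₂₁, Matrix.fromBlocks_apply₂₂, Matrix.of_apply,
      Matrix.sub_apply, star_star] at h1 h2
    linear_combination h2 - h1
  -- basic instances of key
  have h00 : x 0 * star (x 0) - y 0 * star (y 0) = (d : ℂ) := by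
    have h := key 0 0
    rw [Matrix.diagonal_apply_eq] at h
    simpa using h
  have h11 : x 1 * star (x 1) - y 1 * star (y 1) = -(d : ℂ) := by
    have h := key 1 1
    rw [Matrix.diagonal_apply_eq] at h
    simpa using h
  have h01 : x 0 * star (x 1) = y 0 * star (y 1) := by
    have h := key 0 1
    rw [Matrix.diagonal_apply_ne _ (show (0 : Fin (m + 2)) ≠ 1 by simp [Fin.ext_iff]), sub_eq_zero] at h
    exact h
  -- first part : vanishing of tails
  have hzero : ∀ i : Fin (m + 2), 2 ≤ (i : ℕ) → x i = 0 ∧ y i = 0 := by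
    intro i hi
    have hne0 : (i : ℕ) ≠ 0 := by omega
    have hne1 : (i : ℕ) ≠ 1 := by omega
    have hii : x i * star (x i) = y i * star (y i) := by
      have h := key i i
      rw [Matrix.diagonal_apply_eq] at h
      rw [if_neg hne0, if_neg hne1, sub_eq_zero] at h
      exact h
    have hxi : x i = 0 := by
      by_contra hx
      have hneF : i ≠ (0 : Fin (m + 2)) := fun h => hne0 (by simp [h])
      have hi0e : x i * star (x 0) = y i * star (y 0) := by
        have h := key i 0
        rw [Matrix.diagonal_apply_ne _ hneF, sub_eq_zero] at h
        exact h
      have hstar : x 0 * star (x i) = y 0 * star (y i) := by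
        have h := congrArg star hi0e
        simpa [star_mul', star_star, mul_comm] using h
      have hprod : (x i * star (x i)) * (x 0 * star (x 0))
          = (y i * star (y i)) * (y 0 * star (y 0)) := by
        calc (x i * star (x i)) * (x 0 * star (x 0))
            = (x i * star (x 0)) * (x 0 * star (x i)) := by ring
          _ = (y i * star (y 0)) * (y 0 * star (y i)) := by rw [hi0e, hstar]
          _ = (y i * star (y i)) * (y 0 * star (y 0)) := by ring
      rw [hii] at hprod
      have hyi : y i * star (y i) ≠ 0 := by
        rw [← hii]; exact mul_ne_zero hx (star_ne_zero.mpr hx)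
      have hcanc := mul_left_cancel₀ hyi hprod
      have hd0 : (d : ℂ) = 0 := by rw [← h00, hcanc]; ring
      exact hd.ne' (by exact_mod_cast hd0)
    refine ⟨hxi, ?_⟩
    have h0 : y i * star (y i) = 0 := by rw [← hii, hxi, zero_mul]
    rcases mul_eq_zero.mp h0 with h | h
    · exact h
    · exact star_eq_zero.mp h
  -- real versions
  have ra : Complex.normSq (x 0) - Complex.normSq (y 0) = d := by
    have h := h00
    simp only [Complex.star_def, Complex.mul_conj] at h
    exact_mod_cast h
  have rb : Complex.normSq (y 1) - Complex.normSq (x 1) = d := by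
    have h := h11
    simp only [Complex.star_def, Complex.mul_conj] at h
    have h' : ((Complex.normSq (y 1) : ℂ)) - Complex.normSq (x 1) = (d : ℂ) := by
      linear_combination -h
    exact_mod_cast h'
  have rpq : Complex.normSq (x 0) * Complex.normSq (x 1)
      = Complex.normSq (y 0) * Complex.normSq (y 1) := by
    have hs : x 1 * star (x 0) = y 1 * star (y 0) := by
      have h := congrArg star h01
      simpa [star_mul', star_star, mul_comm] using h
    have h : (x 0 * star (x 0)) * (x 1 * star (x 1))
        = (y 0 * star (y 0)) * (y 1 * star (y 1)) := by
      calc (x 0 * star (x 0)) * (x 1 * star (x 1))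
          = (x 0 * star (x 1)) * (x 1 * star (x 0)) := by ring
        _ = (y 0 * star (y 1)) * (y 1 * star (y 0)) := by rw [h01, hs]
        _ = (y 0 * star (y 0)) * (y 1 * star (y 1)) := by ring
    simp only [Complex.star_def, Complex.mul_conj] at h
    exact_mod_cast h
  -- second part
  have hab : Complex.normSq (x 0) - Complex.normSq (x 1) = d := by
    have hp : Complex.normSq (y 0) = Complex.normSq (x 0) - d := by linarith
    have hq : Complex.normSq (y 1) = Complex.normSq (x 1) + d := by linarith
    rw [hp, hq] at rpq
    have hz : d * (Complex.normSq (x 0) - Complex.normSq (x 1) - d) = 0 := by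
      linear_combination -rpq
    rcases mul_eq_zero.mp hz with h | h
    · exact absurd h hd.ne'
    · linarith
  refine ⟨hzero, hab, ?_⟩
  have hp : Complex.normSq (y 0) = Complex.normSq (x 1) := by linarith
  have hq : Complex.normSq (y 1) = Complex.normSq (x 0) := by linarith
  by_cases hx1 : x 1 = 0
  · -- then y 0 = 0 and x 0 ≠ 0
    have hy0 : y 0 = 0 := by
      apply Complex.normSq_eq_zero.mp
      rw [hp, hx1, Complex.normSq_zero]
    have hx0 : x 0 ≠ 0 := by
      intro h
      apply hd.ne'
      rw [← hab, h, hx1]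
      simp
    set c : ℂ := y 1 / star (x 0) with hc_def
    have habs : ‖c‖ = 1 := by
      have h1 : ‖y 1‖ = ‖x 0‖ := by
        rw [Complex.norm_def, Complex.norm_def, hq]
      rw [hc_def, norm_div, Complex.star_def, Complex.norm_conj, h1]
      exact div_self (by simpa using (norm_ne_zero_iff.mpr hx0))
    have hc : Complex.exp (c.arg * Complex.I) = c := by
      have h := Complex.norm_mul_exp_arg_mul_I c
      rwa [habs, Complex.ofReal_one, one_mul] at h
    refine ⟨c.arg, ?_, ?_⟩
    · rw [hy0, hx1, star_zero, mul_zero]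
    · rw [hc, hc_def, div_mul_cancel₀ _ (star_ne_zero.mpr hx0)]
  · -- x 1 ≠ 0, so y 0 ≠ 0
    have hy0 : y 0 ≠ 0 := by
      intro h
      apply hx1
      apply Complex.normSq_eq_zero.mp
      rw [← hp, h, Complex.normSq_zero]
    set c : ℂ := y 0 / star (x 1) with hc_def
    have habs : ‖c‖ = 1 := by
      have h1 : ‖y 0‖ = ‖x 1‖ := by
        rw [Complex.norm_def, Complex.norm_def, hp]
      rw [hc_def, norm_div, Complex.star_def, Complex.norm_conj, h1]
      exact div_self (by simpa using (norm_ne_zero_iff.mpr hx1))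
    have hc : Complex.exp (c.arg * Complex.I) = c := by
      have h := Complex.norm_mul_exp_arg_mul_I c
      rwa [habs, Complex.ofReal_one, one_mul] at h
    have hy0e : y 0 = c * star (x 1) := by
      rw [hc_def, div_mul_cancel₀ _ (star_ne_zero.mpr hx1)]
    have hcc : c * star c = 1 := by
      have h := Complex.mul_conj c
      have h2 : Complex.normSq c = 1 := by
        rw [← Complex.sq_norm, habs, one_pow]
      rw [h2] at h
      simpa using h
    have hx0e : x 0 = c * star (y 1) := by
      have h : x 0 * star (x 1) = (c * star (y 1)) * star (x 1) := by
        rw [h01, hy0e]; ring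
      exact mul_right_cancel₀ (star_ne_zero.mpr hx1) h
    have hy1e : y 1 = c * star (x 0) := by
      have h := congrArg star hx0e
      rw [star_mul', star_star] at h
      calc y 1 = (c * star c) * y 1 := by rw [hcc, one_mul]
        _ = c * (star c * y 1) := by ring
        _ = c * star (x 0) := by rw [← h]
    exact ⟨c.arg, by rw [hc, ← hy0e], by rw [hc, ← hy1e]⟩
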